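/- Let β ∈ D^m and Q_β = {(x,y) ∈ ℝ^n × ℝ^m : ‖x‖ ≤ βᵀy}. Every valid inequality for Q_β that is tight at some point of Q_β has, after scaling by a positive number, the form γᵀx − βᵀy ≤ 0 for some γ ∈ ℝ^n with ‖γ‖ ≤ 1. -/
import Mathlib


open scoped RealInnerProductSpace

theorem stmt13 (n m : ℕ)
    (β : EuclideanSpace ℝ (Fin m)) (hβ : ‖β‖ = 1)
    (Qβ : Set (EuclideanSpace ℝ (Fin n) × EuclideanSpace ℝ (Fin m)))
    (hQβ : Qβ = {p | ‖p.1‖ ≤ ⟪β, p.2⟫})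
    (a : EuclideanSpace ℝ (Fin n)) (b : EuclideanSpace ℝ (Fin m)) (c : ℝ)
    (hab : ¬ (a = 0 ∧ b = 0))
    (hvalid : ∀ p ∈ Qβ, ⟪a, p.1⟫ + ⟪b, p.2⟫ ≤ c)
    (htight : ∃ p ∈ Qβ, ⟪a, p.1⟫ + ⟪b, p.2⟫ = c) :
    ∃ μ : ℝ, 0 < μ ∧ ∃ γ : EuclideanSpace ℝ (Fin n), ‖γ‖ ≤ 1 ∧
      μ • a = γ ∧ μ • b = -β ∧ μ * c = 0 := by
  subst hQβ
  have hβ2 : ⟪β, β⟫ = 1 := by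
    rw [real_inner_self_eq_norm_sq, hβ]; norm_num
  -- c ≥ 0
  have h0 : (0:ℝ) ≤ c := by
    have := hvalid (0, 0) (by simp [Set.mem_setOf_eq])
    simpa using this
  obtain ⟨p, hp, hpeq⟩ := htight
  simp only [Set.mem_setOf_eq] at hp
  -- c = 0
  have hc0 : c = 0 := by
    have h2 : ((2:ℝ) • p.1, (2:ℝ) • p.2) ∈
        {p : EuclideanSpace ℝ (Fin n) × EuclideanSpace ℝ (Fin m) | ‖p.1‖ ≤ ⟪β, p.2⟫} := by
      simp only [Set.mem_setOf_eq, norm_smul, real_inner_smul_right]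
      have : ‖(2:ℝ)‖ = 2 := by norm_num
      rw [this]; nlinarith [hp]
    have h3 := hvalid _ h2
    simp only [real_inner_smul_right] at h3
    nlinarith [hpeq]
  set s : ℝ := ⟪β, b⟫ with hs
  set y₀ : EuclideanSpace ℝ (Fin m) := b - s • β with hy₀
  have hβy₀ : ⟪β, y₀⟫ = 0 := by
    rw [hy₀, inner_sub_right, real_inner_smul_right, hβ2]; ring
  have hmem : ∀ y : EuclideanSpace ℝ (Fin m), (0:ℝ) ≤ ⟪β, y⟫ →
      ((0 : EuclideanSpace ℝ (Fin n)), y) ∈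
      {p : EuclideanSpace ℝ (Fin n) × EuclideanSpace ℝ (Fin m) | ‖p.1‖ ≤ ⟪β, p.2⟫} := by
    intro y hy
    simpa [Set.mem_setOf_eq] using hy
  have hby₀ : ⟪b, y₀⟫ = 0 := by
    have h1 := hvalid _ (hmem y₀ (le_of_eq hβy₀.symm))
    have h2 := hvalid _ (hmem (-y₀) (by rw [inner_neg_right, hβy₀]; norm_num))
    simp only [inner_zero_right, inner_neg_right] at h1 h2
    linarith
  have hbs : b = s • β := by
    have hnorm : ⟪y₀, y₀⟫ = 0 := by
      rw [hy₀, inner_sub_left, real_inner_smul_left, ← hy₀, hby₀, hβy₀]; ring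
    have : y₀ = 0 := by
      rwa [inner_self_eq_zero] at hnorm
    rw [hy₀, sub_eq_zero] at this
    exact this
  have hbβ : ⟪b, β⟫ = s := (real_inner_comm b β).symm
  have hsle : s ≤ 0 := by
    have := hvalid _ (hmem β (by rw [hβ2]; norm_num))
    simp only [inner_zero_right] at this
    rw [hbβ] at this
    linarith
  -- key inequality: ‖a‖ * (‖a‖ + s) ≤ 0
  have hkey : ‖a‖ * (‖a‖ + s) ≤ 0 := by
    have hmem2 : (a, ‖a‖ • β) ∈
        {p : EuclideanSpace ℝ (Fin n) × EuclideanSpace ℝ (Fin m) | ‖p.1‖ ≤ ⟪β, p.2⟫} := by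
      show ‖a‖ ≤ ⟪β, ‖a‖ • β⟫
      rw [real_inner_smul_right, hβ2, mul_one]
    have := hvalid _ hmem2
    rw [real_inner_self_eq_norm_sq, real_inner_smul_right, hbβ, hc0] at this
    nlinarith [this]
  have hslt : s < 0 := by
    rcases lt_or_eq_of_le hsle with h | h
    · exact h
    · exfalso
      have hb0 : b = 0 := by rw [hbs, h, zero_smul]
      rw [h, add_zero] at hkey
      have h2 : ‖a‖ = 0 := by nlinarith [norm_nonneg a]
      exact hab ⟨norm_eq_zero.mp h2, hb0⟩
  have hna : ‖a‖ ≤ -s := by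
    rcases eq_or_ne a 0 with h | h
    · simp [h]; linarith
    · have : 0 < ‖a‖ := norm_pos_iff.mpr h
      nlinarith [hkey]
  have hμ : 0 < -s⁻¹ := by
    rw [← inv_neg]
    exact inv_pos.mpr (by linarith)
  refine ⟨-s⁻¹, hμ, (-s⁻¹) • a, ?_, rfl, ?_, by rw [hc0]; ring⟩
  · rw [norm_smul, Real.norm_eq_abs, abs_of_pos hμ, ← inv_neg,
      inv_mul_le_iff₀ (by linarith : (0:ℝ) < -s)]
    linarith
  · rw [hbs, smul_smul, show -s⁻¹ * s = -1 from by
      rw [neg_mul, inv_mul_cancel₀ (ne_of_lt hslt)], neg_one_smul]
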